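/- Fix an integer t ≥ 1 and reals 0 < ε ≤ d ≤ M. Let X be the disjoint union {a₁} ∪ A₂ ∪ {b₁} ∪ B₂ with |A₂| = |B₂| = t, equipped with the distance: ε between two distinct points of A₂ and between two distinct points of B₂; d between a₁ and any point of A₂ and between b₁ and any point of B₂; and M between any point of {a₁} ∪ A₂ and any point of {b₁} ∪ B₂. Then: (i) this distance is a metric on X; let the groups be X₁ = {a₁} ∪ B₂ and X₂ = {b₁} ∪ A₂ and consider the objective Φ(C) := max( Σ_{u∈X₁} d(u,C), Σ_{u∈X₂} d(u,C) ) over 2-element center sets C ⊆ X; (ii) Φ({a₁,b₁}) = t·d; (iii) for any x ∈ A₂ and y ∈ B₂, Φ({x,y}) ≤ t·ε + d, so the optimal objective is at most t·ε + d; and (iv) {a₁,b₁} is locally optimal under single swaps: every C' obtained from {a₁,b₁} by removing one center and adding one point of X \ {a₁,b₁} satisfies Φ(C') ≥ t·d. Hence the local search algorithm for the AbsError-fair objective can return a local optimum whose objective is at least (t·d)/(t·ε + d) times the global optimum, a ratio that tends to t as ε → 0. -/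

import Mathlib

open Finset

/-- A "side" of the instance: one isolated point (`Sum.inl`, i.e. `a₁` or `b₁`)
together with `t` clustered points (`Sum.inr`, i.e. `A₂` or `B₂`). -/
abbrev LSide (t : ℕ) := Unit ⊕ Fin t

/-- The point set `X = {a₁} ∪ A₂ ∪ {b₁} ∪ B₂`: the left summand is the `A` side
and the right summand is the `B` side. -/
abbrev LPt (t : ℕ) := LSide t ⊕ LSide t

/-- Distance within one side: `0` on the diagonal, `ε` between two distinct
clustered points, `d` between the isolated point and a clustered point. -/
def lsDist (t : ℕ) (ε d : ℝ) : LSide t → LSide t → ℝ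
  | Sum.inl _, Sum.inl _ => 0
  | Sum.inl _, Sum.inr _ => d
  | Sum.inr _, Sum.inl _ => d
  | Sum.inr i, Sum.inr j => if i = j then 0 else ε

/-- The distance on `X`: `lsDist` within a side, `M` across the two sides. -/
def lpDist (t : ℕ) (ε d M : ℝ) : LPt t → LPt t → ℝ
  | Sum.inl a, Sum.inl b => lsDist t ε d a b
  | Sum.inl _, Sum.inr _ => M
  | Sum.inr _, Sum.inl _ => M
  | Sum.inr a, Sum.inr b => lsDist t ε d a b

def pa1 (t : ℕ) : LPt t := Sum.inl (Sum.inl ())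
def pb1 (t : ℕ) : LPt t := Sum.inr (Sum.inl ())
def pA2 (t : ℕ) (i : Fin t) : LPt t := Sum.inl (Sum.inr i)
def pB2 (t : ℕ) (i : Fin t) : LPt t := Sum.inr (Sum.inr i)

/-- Group `X₁ = {a₁} ∪ B₂`. -/
def grp1 (t : ℕ) : Finset (LPt t) := insert (pa1 t) (univ.image (pB2 t))

/-- Group `X₂ = {b₁} ∪ A₂`. -/
def grp2 (t : ℕ) : Finset (LPt t) := insert (pb1 t) (univ.image (pA2 t))

/-- The AbsError-fair objective `Φ(C) = max(∑_{u ∈ X₁} d(u,C), ∑_{u ∈ X₂} d(u,C))`. -/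
noncomputable def lsPhi (t : ℕ) (ε d M : ℝ) (C : Finset (LPt t)) (hC : C.Nonempty) : ℝ :=
  max (∑ u ∈ grp1 t, C.inf' hC (fun c => lpDist t ε d M u c))
      (∑ u ∈ grp2 t, C.inf' hC (fun c => lpDist t ε d M u c))


lemma inf_pair {t : ℕ} (x y : LPt t) (f : LPt t → ℝ) :
    ({x, y} : Finset (LPt t)).inf' (insert_nonempty _ _) f = min (f x) (f y) := by
  simp [Finset.inf'_insert, min_def]

lemma sum_grp1 {t : ℕ} (g : LPt t → ℝ) :
    ∑ u ∈ grp1 t, g u = g (pa1 t) + ∑ i, g (pB2 t i) := by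
  rw [grp1, Finset.sum_insert (by simp [pa1, pB2]), Finset.sum_image]
  intro i _ j _ h; simpa [pB2] using h

lemma sum_grp2 {t : ℕ} (g : LPt t → ℝ) :
    ∑ u ∈ grp2 t, g u = g (pb1 t) + ∑ i, g (pA2 t i) := by
  rw [grp2, Finset.sum_insert (by simp [pb1, pA2]), Finset.sum_image]
  intro i _ j _ h; simpa [pA2] using h

/-- For `t ≥ 1` and `0 < ε ≤ d ≤ M`, (i) `lpDist` is a metric on
`X = {a₁} ∪ A₂ ∪ {b₁} ∪ B₂`; (ii) `Φ({a₁,b₁}) = t·d`; (iii) for any `x ∈ A₂`,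
`y ∈ B₂`, `Φ({x,y}) ≤ t·ε + d` (so the optimum is at most `t·ε + d`); and
(iv) `{a₁,b₁}` is locally optimal under single swaps: every set obtained from
it by swapping one center for a point of `X \ {a₁,b₁}` has objective at least
`t·d`. -/
theorem local_search_bad_instance (t : ℕ) (ht : 1 ≤ t) (ε d M : ℝ)
    (hε : 0 < ε) (hεd : ε ≤ d) (hdM : d ≤ M) :
    ((∀ p q : LPt t, lpDist t ε d M p q = 0 ↔ p = q) ∧
     (∀ p q : LPt t, lpDist t ε d M p q = lpDist t ε d M q p) ∧
     (∀ p q r : LPt t, lpDist t ε d M p r ≤ lpDist t ε d M p q + lpDist t ε d M q r)) ∧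
    (lsPhi t ε d M {pa1 t, pb1 t} (insert_nonempty _ _) = t * d) ∧
    (∀ i j : Fin t,
      lsPhi t ε d M {pA2 t i, pB2 t j} (insert_nonempty _ _) ≤ t * ε + d) ∧
    (∀ w : LPt t, w ≠ pa1 t → w ≠ pb1 t →
      t * d ≤ lsPhi t ε d M {pa1 t, w} (insert_nonempty _ _) ∧
      t * d ≤ lsPhi t ε d M {pb1 t, w} (insert_nonempty _ _)) := by
  have hd : 0 < d := hε.trans_le hεd
  have hM : 0 < M := hd.trans_le hdM
  refine ⟨⟨?_, ?_, ?_⟩, ?_, ?_, ?_⟩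
  · rintro ((⟨⟩|i)|(⟨⟩|i)) ((⟨⟩|j)|(⟨⟩|j)) <;>
      simp [lpDist, lsDist, hd.ne', hM.ne', hε.ne'] <;>
      (try split_ifs) <;> simp_all [hε.ne']
  · rintro ((⟨⟩|i)|(⟨⟩|i)) ((⟨⟩|j)|(⟨⟩|j)) <;>
      simp [lpDist, lsDist] <;> (try split_ifs) <;> simp_all
  · rintro ((⟨⟩|i)|(⟨⟩|i)) ((⟨⟩|j)|(⟨⟩|j)) ((⟨⟩|k)|(⟨⟩|k)) <;>
      simp [lpDist, lsDist] <;> (try split_ifs) <;> first | linarith | simp_all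
  · -- Φ({a1,b1}) = t*d
    have h1 : ∑ u ∈ grp1 t, ({pa1 t, pb1 t} : Finset (LPt t)).inf'
        (insert_nonempty _ _) (fun c => lpDist t ε d M u c) = t * d := by
      simp only [sum_grp1, inf_pair]
      simp [lpDist, lsDist, pa1, pb1, pB2, min_eq_left hM.le, min_eq_right hdM,
        Finset.sum_const, mul_comm]
    have h2 : ∑ u ∈ grp2 t, ({pa1 t, pb1 t} : Finset (LPt t)).inf'
        (insert_nonempty _ _) (fun c => lpDist t ε d M u c) = t * d := by
      simp only [sum_grp2, inf_pair]
      simp [lpDist, lsDist, pa1, pb1, pA2, min_eq_right hM.le, min_eq_left hdM,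
        Finset.sum_const, mul_comm]
    simp only [lsPhi]; rw [h1, h2, max_self]
  · intro i j
    have h1 : ∑ u ∈ grp1 t, ({pA2 t i, pB2 t j} : Finset (LPt t)).inf'
        (insert_nonempty _ _) (fun c => lpDist t ε d M u c) ≤ t * ε + d := by
      simp only [sum_grp1, inf_pair]
      have e1 : min (lpDist t ε d M (pa1 t) (pA2 t i)) (lpDist t ε d M (pa1 t) (pB2 t j)) = d := by
        simp [lpDist, lsDist, pa1, pA2, pB2, min_eq_left hdM]
      have e2 : ∀ k : Fin t, min (lpDist t ε d M (pB2 t k) (pA2 t i))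
          (lpDist t ε d M (pB2 t k) (pB2 t j)) ≤ ε := by
        intro k
        simp only [lpDist, lsDist, pB2, pA2]
        exact le_trans (min_le_right _ _) (by split_ifs <;> linarith)
      calc _ ≤ d + ∑ _k : Fin t, ε := by
              rw [e1]; gcongr with k _; exact e2 k
        _ = t * ε + d := by simp [mul_comm]; ring
    have h2 : ∑ u ∈ grp2 t, ({pA2 t i, pB2 t j} : Finset (LPt t)).inf'
        (insert_nonempty _ _) (fun c => lpDist t ε d M u c) ≤ t * ε + d := by
      simp only [sum_grp2, inf_pair]
      have e1 : min (lpDist t ε d M (pb1 t) (pA2 t i)) (lpDist t ε d M (pb1 t) (pB2 t j)) = d := by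
        simp [lpDist, lsDist, pb1, pA2, pB2, min_eq_right hdM]
      have e2 : ∀ k : Fin t, min (lpDist t ε d M (pA2 t k) (pA2 t i))
          (lpDist t ε d M (pA2 t k) (pB2 t j)) ≤ ε := by
        intro k
        simp only [lpDist, lsDist, pB2, pA2]
        exact le_trans (min_le_left _ _) (by split_ifs <;> linarith)
      calc _ ≤ d + ∑ _k : Fin t, ε := by
              rw [e1]; gcongr with k _; exact e2 k
        _ = t * ε + d := by simp [mul_comm]; ring
    simp only [lsPhi, max_le_iff]; exact ⟨h1, h2⟩
  · rintro ((⟨⟩|i)|(⟨⟩|i)) hwa hwb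
    · exact absurd rfl hwa
    · -- w = pA2 i
      have hw : (Sum.inl (Sum.inr i) : LPt t) = pA2 t i := rfl
      rw [hw]
      constructor
      · -- {pa1, pA2 i}: grp1 sum = 0 + t*M ≥ t*d
        refine le_trans ?_ (le_max_left _ _)
        have : ∑ u ∈ grp1 t, ({pa1 t, pA2 t i} : Finset (LPt t)).inf'
            (insert_nonempty _ _) (fun c => lpDist t ε d M u c) = t * M := by
          simp only [sum_grp1, inf_pair]
          simp [lpDist, lsDist, pa1, pA2, pB2, min_eq_left hd.le, min_eq_left hdM, min_self, Finset.sum_const, mul_comm] <;> linarith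
        rw [this]
        have h0 : (0:ℝ) ≤ t := Nat.cast_nonneg t
        nlinarith
      · -- {pb1, pA2 i}: grp1 sum = d + t*d ≥ t*d
        refine le_trans ?_ (le_max_left _ _)
        have : ∑ u ∈ grp1 t, ({pb1 t, pA2 t i} : Finset (LPt t)).inf'
            (insert_nonempty _ _) (fun c => lpDist t ε d M u c) = d + t * d := by
          simp only [sum_grp1, inf_pair]
          simp [lpDist, lsDist, pa1, pb1, pA2, pB2, min_eq_left hdM, min_eq_right hdM,
            min_self, Finset.sum_const, mul_comm]
        rw [this]; linarith
    · exact absurd rfl hwb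
    · -- w = pB2 i
      have hw : (Sum.inr (Sum.inr i) : LPt t) = pB2 t i := rfl
      rw [hw]
      constructor
      · -- {pa1, pB2 i}: grp2 sum = d + t*d
        refine le_trans ?_ (le_max_right _ _)
        have : ∑ u ∈ grp2 t, ({pa1 t, pB2 t i} : Finset (LPt t)).inf'
            (insert_nonempty _ _) (fun c => lpDist t ε d M u c) = d + t * d := by
          simp only [sum_grp2, inf_pair]
          simp [lpDist, lsDist, pa1, pb1, pA2, pB2, min_eq_right hdM, min_eq_left hdM,
            Finset.sum_const, mul_comm]
        rw [this]; linarith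
      · -- {pb1, pB2 i}: grp2 sum = 0 + t*M
        refine le_trans ?_ (le_max_right _ _)
        have : ∑ u ∈ grp2 t, ({pb1 t, pB2 t i} : Finset (LPt t)).inf'
            (insert_nonempty _ _) (fun c => lpDist t ε d M u c) = t * M := by
          simp only [sum_grp2, inf_pair]
          simp [lpDist, lsDist, pb1, pB2, pA2, min_eq_left hd.le, min_eq_left hdM, min_self, Finset.sum_const, mul_comm] <;> linarith
        rw [this]
        have h0 : (0:ℝ) ≤ t := Nat.cast_nonneg t
        nlinarith
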